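/- Let z ∈ ℂ with |z|² < R. Then the sequence a c_z, defined componentwise by (a c_z)(n) = √([n+1]_q) · c_z(n+1), is again square-summable, and a c_z = z • c_z as elements of ℓ²(ℕ, ℂ); that is, the q-coherent state c_z is an eigenvector of the q-boson annihilation operator with eigenvalue z. -/

import Mathlib

open scoped BigOperators

/-- The q-number `[n]_q = (1 - q^n)/(1 - q)`. -/
noncomputable def qnum (q : ℝ) (n : ℕ) : ℝ := (1 - q ^ n) / (1 - q)

/-- The q-factorial `[n]_q! = [1]_q [2]_q ⋯ [n]_q`, with `[0]_q! = 1`. -/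
noncomputable def qfact (q : ℝ) : ℕ → ℝ
  | 0 => 1
  | n + 1 => qfact q n * qnum q (n + 1)

/-- The complex q-exponential `e_q(w) = ∑ w^n/[n]_q!`. -/
noncomputable def qexC (q : ℝ) (w : ℂ) : ℂ := ∑' n : ℕ, w ^ n / (qfact q n : ℂ)

/-- The real q-exponential `e_q(x) = ∑ x^n/[n]_q!`. -/
noncomputable def qexR (q : ℝ) (x : ℝ) : ℝ := ∑' n : ℕ, x ^ n / qfact q n

/-- The normalized q-coherent state `c_z(n) = e_q(|z|²)^{-1/2} z^n / √([n]_q!)`. -/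
noncomputable def coh (q : ℝ) (z : ℂ) (n : ℕ) : ℂ :=
  (((Real.sqrt (qexR q (‖z‖ ^ 2)))⁻¹ : ℝ) : ℂ) * z ^ n / ((Real.sqrt (qfact q n) : ℝ) : ℂ)

/-- The q-boson annihilation operator on sequences: `(a c)(n) = √([n+1]_q) c(n+1)`. -/
noncomputable def annOp (q : ℝ) (c : ℕ → ℂ) : ℕ → ℂ :=
  fun n => ((Real.sqrt (qnum q (n + 1)) : ℝ) : ℂ) * c (n + 1)

lemma qnum_pos {q : ℝ} (hq0 : 0 < q) (hq1 : q < 1) (n : ℕ) : 0 < qnum q (n + 1) := by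
  have h1 : q ^ (n + 1) < 1 := pow_lt_one₀ hq0.le hq1 (Nat.succ_ne_zero n)
  exact div_pos (by linarith) (by linarith)

lemma qfact_pos {q : ℝ} (hq0 : 0 < q) (hq1 : q < 1) (n : ℕ) : 0 < qfact q n := by
  induction n with
  | zero => norm_num [qfact]
  | succ k ih => exact mul_pos ih (qnum_pos hq0 hq1 k)

lemma key_eq {q : ℝ} (hq0 : 0 < q) (hq1 : q < 1) (z : ℂ) (n : ℕ) :
    annOp q (coh q z) n = z * coh q z n := by
  have hb := qnum_pos hq0 hq1 n
  have ha := qfact_pos hq0 hq1 n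
  have hsb : ((Real.sqrt (qnum q (n + 1)) : ℝ) : ℂ) ≠ 0 := by
    exact_mod_cast (Real.sqrt_pos.2 hb).ne'
  have hsa : ((Real.sqrt (qfact q n) : ℝ) : ℂ) ≠ 0 := by
    exact_mod_cast (Real.sqrt_pos.2 ha).ne'
  have hmul : Real.sqrt (qfact q (n + 1))
      = Real.sqrt (qfact q n) * Real.sqrt (qnum q (n + 1)) := by
    rw [qfact, Real.sqrt_mul ha.le]
  simp only [annOp, coh, hmul, pow_succ]
  push_cast
  field_simp

lemma coh_norm_sq {q : ℝ} (hq0 : 0 < q) (hq1 : q < 1) (z : ℂ) (n : ℕ) :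
    ‖coh q z n‖ ^ 2
      = ((Real.sqrt (qexR q (‖z‖ ^ 2)))⁻¹) ^ 2 * (‖z‖ ^ 2) ^ n / qfact q n := by
  have ha := qfact_pos hq0 hq1 n
  have h1 : ‖coh q z n‖
      = (Real.sqrt (qexR q (‖z‖ ^ 2)))⁻¹ * ‖z‖ ^ n / Real.sqrt (qfact q n) := by
    rw [coh, norm_div, norm_mul, Complex.norm_real, Complex.norm_real, norm_pow,
      Real.norm_of_nonneg (by positivity), Real.norm_of_nonneg (Real.sqrt_nonneg _)]
  rw [h1, div_pow, mul_pow, Real.sq_sqrt ha.le, ← pow_mul, mul_comm n 2, pow_mul]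

/-- for `|z|² < R`, the sequence `a c_z` is square-summable and
`a c_z = z • c_z`: the q-coherent state is an eigenvector of the annihilation
operator with eigenvalue `z`. -/
theorem coherent_state_eigenvector (q : ℝ) (hq0 : 0 < q) (hq1 : q < 1) (z : ℂ)
    (hz : ‖z‖ ^ 2 < 1 / (1 - q)) :
    Summable (fun n : ℕ => ‖annOp q (coh q z) n‖ ^ 2) ∧
    annOp q (coh q z) = z • coh q z := by
  have h1q : (0:ℝ) < 1 - q := by linarith
  have heq : annOp q (coh q z) = z • coh q z := by
    funext n; exact key_eq hq0 hq1 z n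
  refine ⟨?_, heq⟩
  set N : ℝ := (Real.sqrt (qexR q (‖z‖ ^ 2)))⁻¹ with hN
  set C : ℝ := ‖z‖ ^ 2 * N ^ 2 with hCdef
  set x : ℝ := ‖z‖ ^ 2 with hxdef
  have hnorm : ∀ n : ℕ, ‖annOp q (coh q z) n‖ ^ 2 = C * x ^ n / qfact q n := by
    intro n
    rw [key_eq hq0 hq1 z n, norm_mul, mul_pow, coh_norm_sq hq0 hq1 z n]
    rw [hCdef, hxdef, hN]; ring
  refine Summable.congr (f := fun n => C * x ^ n / qfact q n) ?_
    (fun n => (hnorm n).symm)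
  by_cases hC : C = 0
  · simpa [hC] using summable_zero
  · have hx : (0:ℝ) < x := by
      rcases mul_ne_zero_iff.1 hC with ⟨h1, _⟩
      have : x ≠ 0 := h1
      positivity
    have hC' : (0:ℝ) < C := by
      have : (0:ℝ) ≤ C := by rw [hCdef]; positivity
      exact lt_of_le_of_ne this (Ne.symm hC)
    apply summable_of_ratio_test_tendsto_lt_one (l := x * (1 - q))
    · calc x * (1 - q) < (1 / (1 - q)) * (1 - q) :=
            mul_lt_mul_of_pos_right hz h1q
        _ = 1 := by field_simp
    · filter_upwards with n
      have ha := qfact_pos hq0 hq1 n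
      exact ne_of_gt (div_pos (mul_pos hC' (pow_pos hx n)) ha)
    · have hrat : ∀ n : ℕ, ‖C * x ^ (n + 1) / qfact q (n + 1)‖ / ‖C * x ^ n / qfact q n‖
          = x / qnum q (n + 1) := by
        intro n
        have ha := qfact_pos hq0 hq1 n
        have hb := qnum_pos hq0 hq1 n
        rw [Real.norm_of_nonneg
            (div_pos (mul_pos hC' (pow_pos hx _)) (qfact_pos hq0 hq1 _)).le,
          Real.norm_of_nonneg
            (div_pos (mul_pos hC' (pow_pos hx _)) (qfact_pos hq0 hq1 _)).le,
          qfact, pow_succ]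
        rw [div_div_div_eq]
        rw [show C * (x ^ n * x) * qfact q n = x * (C * x ^ n * qfact q n) from by ring,
          show qfact q n * qnum q (n + 1) * (C * x ^ n) = qnum q (n + 1) * (C * x ^ n * qfact q n)
            from by ring,
          mul_div_mul_right _ _ (ne_of_gt (mul_pos (mul_pos hC' (pow_pos hx n)) ha))]
      simp only [hrat]
      have hpow : Filter.Tendsto (fun n : ℕ => q ^ (n + 1)) Filter.atTop (nhds 0) :=
        (tendsto_pow_atTop_nhds_zero_of_lt_one hq0.le hq1).comp
          (Filter.tendsto_add_atTop_nat 1)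
      have hq' : Filter.Tendsto (fun n : ℕ => qnum q (n + 1)) Filter.atTop
          (nhds (1 / (1 - q))) := by
        have : Filter.Tendsto (fun n : ℕ => (1 - q ^ (n + 1)) / (1 - q)) Filter.atTop
            (nhds ((1 - 0) / (1 - q))) :=
          Filter.Tendsto.div_const (Filter.Tendsto.const_sub 1 hpow) _
        simpa [qnum] using this
      have hfin := (Filter.Tendsto.div (tendsto_const_nhds (x := x)) hq'
        (one_div_ne_zero h1q.ne'))
      simpa [one_div, div_inv_eq_mul, Pi.div_def] using hfin
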